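/- Let a, τ, q ∈ ℝ and let d : ℕ → ℝ satisfy d k > 0 for all k, d 1 = τ·d 0 + a, and d(k+1) = τ·d(k) − q·d(k−1) + a for all k ≥ 1. Let W and V be the linear endomorphisms of the space of finitely supported functions ℕ → ℂ determined on the standard basis (e_k) by W e₀ = 0, W e_{k+1} = √(d k) • e_k, and V e_k = √(d k) • e_{k+1}. Then W and V satisfy the defining relations of C_{L,a}: W∘W∘V = a•W − q•(V∘W∘W) + τ•(W∘V∘W) and W∘V∘V = a•V − q•(V∘V∘W) + τ•(V∘W∘V). -/
import Mathlib


/-- a forward orbit of `L̂(x,y) = (τx − qy + a, x)` starting on the positive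
x-axis and staying in the open positive quadrant induces a one-sided infinite-dimensional
representation of `C_{L,a}` by weighted shift operators on finitely supported functions
`ℕ → ℂ` (here `ℕ →₀ ℂ`, with standard basis `e k = Finsupp.single k 1`). -/
theorem stmt_17 (a τ q : ℝ)
    (d : ℕ → ℝ) (hd : ∀ k, 0 < d k)
    (hd1 : d 1 = τ * d 0 + a)
    (horbit : ∀ k : ℕ, 1 ≤ k → d (k + 1) = τ * d k - q * d (k - 1) + a)
    (W V : (ℕ →₀ ℂ) →ₗ[ℂ] (ℕ →₀ ℂ))
    (hW0 : W (Finsupp.single 0 1) = 0)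
    (hW : ∀ k : ℕ, W (Finsupp.single (k + 1) 1) = (Real.sqrt (d k) : ℂ) • Finsupp.single k 1)
    (hV : ∀ k : ℕ, V (Finsupp.single k 1) = (Real.sqrt (d k) : ℂ) • Finsupp.single (k + 1) 1) :
    W ∘ₗ W ∘ₗ V = a • W - q • (V ∘ₗ W ∘ₗ W) + τ • (W ∘ₗ V ∘ₗ W) ∧
    W ∘ₗ V ∘ₗ V = a • V - q • (V ∘ₗ V ∘ₗ W) + τ • (V ∘ₗ W ∘ₗ V) := by
  have sq : ∀ k, (Real.sqrt (d k) : ℂ) * (Real.sqrt (d k) : ℂ) = (d k : ℂ) := fun k => by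
    rw [← Complex.ofReal_mul, Real.mul_self_sqrt (hd k).le]
  have sq2 : ∀ k, (Real.sqrt (d k) : ℂ) ^ 2 = (d k : ℂ) := fun k => by
    rw [pow_two, sq]
  have hd1' : (d 1 : ℂ) = τ * d 0 + a := by exact_mod_cast congrArg Complex.ofReal hd1
  have horb' : ∀ n : ℕ, (d (n + 2) : ℂ) = τ * d (n + 1) - q * d n + a := fun n => by
    have := horbit (n + 1) (Nat.le_add_left 1 n)
    simp only [Nat.add_sub_cancel] at this
    exact_mod_cast congrArg Complex.ofReal this
  constructor
  · apply Module.Basis.ext Finsupp.basisSingleOne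
    intro k
    simp only [Finsupp.coe_basisSingleOne, LinearMap.comp_apply, LinearMap.add_apply,
      LinearMap.sub_apply, LinearMap.smul_apply, map_smul, hW, hV, hW0, smul_smul, smul_zero, sq]
    rcases k with _ | m
    · simp [hW0]
    · rw [hW]
      rcases m with _ | n
      · simp only [hW0, map_smul, smul_zero, smul_smul, hV, hW, sq, map_zero, sub_zero]
        match_scalars
        simp only [Complex.coe_algebraMap, sq2, sq, zero_add]
        linear_combination (Real.sqrt (d 0) : ℂ) * hd1'
      · simp only [hW, map_smul, smul_smul, hV, sq]
        match_scalars
        simp only [Complex.coe_algebraMap, sq2, sq, zero_add]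
        linear_combination (Real.sqrt (d (n + 1)) : ℂ) * horb' n + ((q:ℂ) * (Real.sqrt (d (n + 1)) : ℂ)) * sq n
  · apply Module.Basis.ext Finsupp.basisSingleOne
    intro k
    simp only [Finsupp.coe_basisSingleOne, LinearMap.comp_apply, LinearMap.add_apply,
      LinearMap.sub_apply, LinearMap.smul_apply, map_smul, hW, hV, hW0, smul_smul, smul_zero, sq]
    rcases k with _ | m
    · simp only [hV, map_smul, hW, smul_smul, sq, hW0, smul_zero, map_zero, sub_zero]
      match_scalars
      simp only [Complex.coe_algebraMap, sq2, sq, zero_add]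
      linear_combination (Real.sqrt (d 0) : ℂ) * hd1' + (Real.sqrt (d 0) : ℂ) * sq 1
    · simp only [hV, map_smul, hW, smul_smul, sq]
      match_scalars
      simp only [Complex.coe_algebraMap, sq2, sq, zero_add, show m+1+1 = m+2 from rfl]
      linear_combination (Real.sqrt (d (m + 1)) : ℂ) * horb' m + (Real.sqrt (d (m + 1)) : ℂ) * sq (m + 2)
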